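/- (Structured pruning update.) Let H ∈ ℝ^{b×b} be symmetric positive definite, let W ∈ ℝ^{c×b}, and fix s ∈ {1,…,b}. Taking the pruning indices q_j = j for j = 1,…,s (the first s columns), the Thanos update for row k of W is δ̂ = −W_{k,1:s} (H⁻¹_{1:s,1:s})⁻¹ H⁻¹_{1:s,:} ∈ ℝ^{1×b}, where W_{k,1:s} ∈ ℝ^{1×s} consists of the first s entries of row k, H⁻¹_{1:s,1:s} is the top-left s×s principal submatrix of H⁻¹, and H⁻¹_{1:s,:} ∈ ℝ^{s×b} consists of the first s rows of H⁻¹. This update satisfies δ̂_j = −W_{kj} for each j ∈ {1,…,s}, and it minimizes (1/2) δ H δᵀ over all δ ∈ ℝ^{1×b} with δ_j = −W_{kj} for j = 1,…,s. -/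

import Mathlib

open Matrix

/-- Structured pruning update: pruning the first `s` columns of row `k` of `W`
via `δ̂ = −W_{k,1:s} (H⁻¹_{1:s,1:s})⁻¹ H⁻¹_{1:s,:}` is feasible (it zeroes the
first `s` weights of the row) and minimizes `(1/2) δ H δᵀ` over all feasible
`δ`. -/
theorem thanos_stmt11 (b c s : ℕ) (hs1 : 1 ≤ s) (hs : s ≤ b)
    (H : Matrix (Fin b) (Fin b) ℝ) (hH : H.PosDef)
    (W : Matrix (Fin c) (Fin b) ℝ) (k : Fin c)
    (R : Matrix (Fin s) (Fin b) ℝ)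
    (hR : R = Matrix.of fun i j => H⁻¹ (Fin.castLE hs i) j)
    (Rhat : Matrix (Fin s) (Fin s) ℝ)
    (hRhat : Rhat = Matrix.of fun i j => H⁻¹ (Fin.castLE hs i) (Fin.castLE hs j))
    (u : Fin s → ℝ) (hu : u = fun j => W k (Fin.castLE hs j))
    (δhat : Fin b → ℝ)
    (hδhat : δhat = -(Matrix.vecMul (Matrix.vecMul u Rhat⁻¹) R)) :
    (∀ j : Fin s, δhat (Fin.castLE hs j) = -(W k (Fin.castLE hs j))) ∧
      ∀ δ : Fin b → ℝ, (∀ j : Fin s, δ (Fin.castLE hs j) = -(W k (Fin.castLE hs j))) →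
        (1 / 2 : ℝ) * (δhat ⬝ᵥ H *ᵥ δhat) ≤ (1 / 2 : ℝ) * (δ ⬝ᵥ H *ᵥ δ) := by
  have hsym : ∀ i j, H i j = H j i := fun i j => by
    simpa using congrFun (congrFun hH.isHermitian j) i
  have hinvPD : (H⁻¹).PosDef := hH.inv
  have hinvsym : ∀ i j, H⁻¹ i j = H⁻¹ j i := fun i j => by
    simpa using congrFun (congrFun hinvPD.isHermitian j) i
  have hHmul : H * H⁻¹ = 1 :=
    Matrix.mul_nonsing_inv H (isUnit_iff_ne_zero.mpr hH.det_pos.ne')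
  -- reindexing lemma
  have hmem : ∀ p : Fin b, p ∈ Finset.univ.map (Fin.castLEEmb hs) ↔ (p : ℕ) < s := by
    intro p
    simp only [Finset.mem_map, Finset.mem_univ, true_and, Fin.castLEEmb_apply]
    constructor
    · rintro ⟨i, rfl⟩; exact i.isLt
    · intro hp; exact ⟨⟨p, hp⟩, rfl⟩
  have hsum : ∀ (x : Fin s → ℝ) (g : Fin b → ℝ),
      (∑ p : Fin b, (if h : (p : ℕ) < s then x ⟨p, h⟩ else 0) * g p)
        = ∑ i : Fin s, x i * g (Fin.castLE hs i) := by
    intro x g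
    rw [← Finset.sum_subset (Finset.subset_univ (Finset.univ.map (Fin.castLEEmb hs)))
      (fun p _ hp => by
        rw [hmem] at hp
        simp [dif_neg hp]),
      Finset.sum_map]
    apply Finset.sum_congr rfl
    intro i _
    simp [Fin.castLEEmb_apply]
  -- Rhat is positive definite
  have hRhatPD : Rhat.PosDef := by
    refine Matrix.PosDef.of_dotProduct_mulVec_pos ?_ ?_
    · rw [hRhat]
      ext i j
      simp only [Matrix.conjTranspose_apply, Matrix.of_apply, star_trivial]
      exact hinvsym _ _
    · intro x hx
      set y : Fin b → ℝ := fun p => if h : (p : ℕ) < s then x ⟨p, h⟩ else 0 with hy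
      have hyc : ∀ i : Fin s, y (Fin.castLE hs i) = x i := fun i => by
        simp [hy]
      have hy0 : y ≠ 0 := by
        obtain ⟨i, hi⟩ := Function.ne_iff.mp hx
        exact Function.ne_iff.mpr ⟨Fin.castLE hs i, by simpa [hyc] using hi⟩
      have hpos := hinvPD.dotProduct_mulVec_pos hy0
      have hq : y ⬝ᵥ H⁻¹ *ᵥ y = x ⬝ᵥ Rhat *ᵥ x := by
        simp only [dotProduct, Matrix.mulVec, hRhat, Matrix.of_apply]
        rw [hsum x (fun p => ∑ q, H⁻¹ p q * y q)]
        apply Finset.sum_congr rfl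
        intro i _
        congr 1
        have : (∑ q, H⁻¹ (Fin.castLE hs i) q * y q)
            = ∑ q, y q * H⁻¹ (Fin.castLE hs i) q := by
          apply Finset.sum_congr rfl; intro q _; ring
        rw [this, hsum x (fun q => H⁻¹ (Fin.castLE hs i) q)]
        apply Finset.sum_congr rfl
        intro j _
        ring
      have hsx : star x = x := by ext i; simp
      have hsy : star y = y := by ext i; simp
      rw [hsx, ← hq, ← hsy]
      exact hpos
  have hRhatmul : Rhat⁻¹ * Rhat = 1 :=
    Matrix.nonsing_inv_mul Rhat (isUnit_iff_ne_zero.mpr hRhatPD.det_pos.ne')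
  -- feasibility
  have hfeas : ∀ j : Fin s, δhat (Fin.castLE hs j) = -(W k (Fin.castLE hs j)) := by
    intro j
    have h1 : (Matrix.vecMul (Matrix.vecMul u Rhat⁻¹) R) (Fin.castLE hs j)
        = Matrix.vecMul (Matrix.vecMul u Rhat⁻¹) Rhat j := by
      simp only [Matrix.vecMul, dotProduct, hR, hRhat, Matrix.of_apply]
    have h2 : Matrix.vecMul (Matrix.vecMul u Rhat⁻¹) Rhat = u := by
      rw [Matrix.vecMul_vecMul, hRhatmul, Matrix.vecMul_one]
    rw [hδhat, Pi.neg_apply, h1, h2, hu]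
  refine ⟨hfeas, ?_⟩
  -- key orthogonality: H *ᵥ δhat is supported on the first s coordinates
  have hkey : ∀ v : Fin b → ℝ, (∀ j : Fin s, v (Fin.castLE hs j) = 0) →
      v ⬝ᵥ H *ᵥ δhat = 0 := by
    intro v hv
    set w : Fin s → ℝ := Matrix.vecMul u Rhat⁻¹ with hw
    have hHδ : ∀ p : Fin b, (H *ᵥ (Matrix.vecMul w R)) p
        = ∑ i : Fin s, w i * (1 : Matrix (Fin b) (Fin b) ℝ) p (Fin.castLE hs i) := by
      intro p
      simp only [Matrix.mulVec, Matrix.vecMul, dotProduct, hR, Matrix.of_apply]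
      calc ∑ x : Fin b, H p x * ∑ i : Fin s, w i * H⁻¹ (Fin.castLE hs i) x
          = ∑ x : Fin b, ∑ i : Fin s, w i * (H p x * H⁻¹ x (Fin.castLE hs i)) := by
            apply Finset.sum_congr rfl
            intro x _
            rw [Finset.mul_sum]
            apply Finset.sum_congr rfl
            intro i _
            rw [hinvsym (Fin.castLE hs i) x]
            ring
        _ = ∑ i : Fin s, ∑ x : Fin b, w i * (H p x * H⁻¹ x (Fin.castLE hs i)) :=
            Finset.sum_comm
        _ = ∑ i : Fin s, w i * (1 : Matrix (Fin b) (Fin b) ℝ) p (Fin.castLE hs i) := by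
            apply Finset.sum_congr rfl
            intro i _
            rw [← Finset.mul_sum, ← Matrix.mul_apply, hHmul]
    have hone : ∀ q : Fin b,
        (∑ p : Fin b, (1 : Matrix (Fin b) (Fin b) ℝ) p q * v p) = v q := by
      intro q
      simp [Matrix.one_apply]
    have hmain : v ⬝ᵥ H *ᵥ (Matrix.vecMul w R) = 0 := by
      simp only [dotProduct, hHδ]
      have : ∀ p : Fin b,
          v p * ∑ i : Fin s, w i * (1 : Matrix (Fin b) (Fin b) ℝ) p (Fin.castLE hs i)
          = ∑ i : Fin s, w i * ((1 : Matrix (Fin b) (Fin b) ℝ) p (Fin.castLE hs i) * v p) := by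
        intro p
        rw [Finset.mul_sum]
        apply Finset.sum_congr rfl
        intro i _
        ring
      rw [Finset.sum_congr rfl fun p _ => this p, Finset.sum_comm]
      apply Finset.sum_eq_zero
      intro i _
      rw [← Finset.mul_sum, hone, hv i, mul_zero]
    rw [hδhat, Matrix.mulVec_neg, dotProduct_neg, hmain, neg_zero]
  -- symmetry of quadratic form
  have hqsym : ∀ a d : Fin b → ℝ, a ⬝ᵥ H *ᵥ d = d ⬝ᵥ H *ᵥ a := by
    intro a d
    simp only [dotProduct, Matrix.mulVec, Finset.mul_sum]
    rw [Finset.sum_comm]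
    apply Finset.sum_congr rfl
    intro i _
    apply Finset.sum_congr rfl
    intro j _
    rw [hsym j i]
    ring
  intro δ hδ
  set v : Fin b → ℝ := δ - δhat with hv
  have hv0 : ∀ j : Fin s, v (Fin.castLE hs j) = 0 := by
    intro j
    simp [hv, hδ j, hfeas j]
  have hδeq : δ = δhat + v := by simp [hv]
  have hexp : δ ⬝ᵥ H *ᵥ δ = δhat ⬝ᵥ H *ᵥ δhat + 2 * (v ⬝ᵥ H *ᵥ δhat) + v ⬝ᵥ H *ᵥ v := by
    rw [hδeq, Matrix.mulVec_add, add_dotProduct, dotProduct_add,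
      dotProduct_add]
    rw [hqsym δhat v]
    ring
  have hvHv : 0 ≤ v ⬝ᵥ H *ᵥ v := by
    simpa using hH.posSemidef.dotProduct_mulVec_nonneg v
  rw [hexp, hkey v hv0]
  linarith
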